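/- arXiv:1612.02843 — 3 statements merged into one kernel-verified Lean document; each statement's English description precedes it below -/
import Mathlib

section
/- For every integer r ≥ 1 there is no finite connected graph G of order at least 2 whose strong resolving graph G_SR is isomorphic to the complete bipartite graph K_{2,r}. -/
open SimpleGraph

variable {V : Type*}

/-- `u` is maximally distant from `v` in `G`: every neighbor `w` of `u`
satisfies `d(v,w) ≤ d(v,u)`. -/
def MaxDistant (G : SimpleGraph V) (u v : V) : Prop :=
  ∀ w, G.Adj u w → G.dist v w ≤ G.dist v u

/-- `u` and `v` are mutually maximally distant in `G`. -/
def MMD (G : SimpleGraph V) (u v : V) : Prop :=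
  MaxDistant G u v ∧ MaxDistant G v u

/-- The boundary of `G`: vertices maximally distant from some vertex. -/
def boundary (G : SimpleGraph V) : Set V := {u | ∃ v, MaxDistant G u v}

/-- The strong resolving graph on the whole vertex set (`G_{SR+I}`):
two vertices are adjacent iff they are distinct and mutually maximally distant. -/
def srGraphI (G : SimpleGraph V) : SimpleGraph V where
  Adj u v := u ≠ v ∧ MMD G u v
  symm := by
    constructor
    rintro u v ⟨hne, h1, h2⟩
    exact ⟨hne.symm, h2, h1⟩
  loopless := by
    constructor
    rintro u ⟨hne, _⟩
    exact hne rfl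

/-- The strong resolving graph `G_SR`, with vertex set the boundary of `G`. -/
def srGraph (G : SimpleGraph V) : SimpleGraph (boundary G) :=
  (srGraphI G).induce (boundary G)

/-- `u` and `v` are true twins: distinct vertices with equal closed neighborhoods. -/
def TrueTwins (G : SimpleGraph V) (u v : V) : Prop :=
  u ≠ v ∧ insert u (G.neighborSet u) = insert v (G.neighborSet v)

/-- `u` and `v` are false twins: distinct vertices with equal open neighborhoods. -/
def FalseTwins (G : SimpleGraph V) (u v : V) : Prop :=
  u ≠ v ∧ G.neighborSet u = G.neighborSet v

/-- A vertex is simplicial if its neighborhood induces a complete graph. -/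
def IsSimplicial (G : SimpleGraph V) (v : V) : Prop :=
  ∀ a b, G.Adj v a → G.Adj v b → a ≠ b → G.Adj a b

/-- `w` strongly resolves `u` and `v`. -/
def StronglyResolves (G : SimpleGraph V) (w u v : V) : Prop :=
  G.dist w u = G.dist w v + G.dist v u ∨ G.dist w v = G.dist w u + G.dist u v

/-- `S` is a strong metric generator for `G`. -/
def IsStrongMetricGenerator (G : SimpleGraph V) (S : Set V) : Prop :=
  ∀ u v : V, u ≠ v → ∃ w ∈ S, StronglyResolves G w u v

/-- The strong metric dimension of `G`. -/
noncomputable def sdim (G : SimpleGraph V) : ℕ :=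
  sInf {n | ∃ S : Set V, S.ncard = n ∧ IsStrongMetricGenerator G S}

/-- `S` is a vertex cover of `H`. -/
def IsVertexCover (H : SimpleGraph V) (S : Set V) : Prop :=
  ∀ u v : V, H.Adj u v → u ∈ S ∨ v ∈ S

/-- The vertex cover number of `H`. -/
noncomputable def vertexCoverNumber (H : SimpleGraph V) : ℕ :=
  sInf {n | ∃ S : Set V, S.ncard = n ∧ _root_.IsVertexCover H S}

/-- The graph `G*`: distinct vertices adjacent iff at distance at least two
or true twins. -/
def GStar (G : SimpleGraph V) : SimpleGraph V where
  Adj u v := u ≠ v ∧ (2 ≤ G.dist u v ∨ TrueTwins G u v)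
  symm := by
    constructor
    rintro u v ⟨hne, h | h⟩
    · exact ⟨hne.symm, Or.inl (by rwa [G.dist_comm])⟩
    · exact ⟨hne.symm, Or.inr ⟨h.1.symm, h.2.symm⟩⟩
  loopless := by
    constructor
    rintro u ⟨hne, _⟩
    exact hne rfl

/-- The direct (tensor) product of two graphs. -/
def DirectProd {α β : Type*} (G : SimpleGraph α) (H : SimpleGraph β) :
    SimpleGraph (α × β) where
  Adj x y := G.Adj x.1 y.1 ∧ H.Adj x.2 y.2
  symm := ⟨fun _ _ h => ⟨h.1.symm, h.2.symm⟩⟩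
  loopless := ⟨fun x h => G.irrefl h.1⟩

/-- The strong product of two graphs. -/
def StrongProd {α β : Type*} (G : SimpleGraph α) (H : SimpleGraph β) :
    SimpleGraph (α × β) where
  Adj x y := x ≠ y ∧ (x.1 = y.1 ∨ G.Adj x.1 y.1) ∧ (x.2 = y.2 ∨ H.Adj x.2 y.2)
  symm := by
    constructor
    rintro x y ⟨hne, h1, h2⟩
    exact ⟨hne.symm, h1.imp Eq.symm Adj.symm, h2.imp Eq.symm Adj.symm⟩
  loopless := by
    constructor
    rintro x ⟨hne, _⟩
    exact hne rfl

/-- The Cartesian sum (disjunctive product) of two graphs. -/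
def CartSum {α β : Type*} (G : SimpleGraph α) (H : SimpleGraph β) :
    SimpleGraph (α × β) where
  Adj x y := G.Adj x.1 y.1 ∨ H.Adj x.2 y.2
  symm := ⟨fun _ _ h => h.imp Adj.symm Adj.symm⟩
  loopless := ⟨fun x h => h.elim G.irrefl H.irrefl⟩

/-- The lexicographic product of two graphs. -/
def LexProd {α β : Type*} (G : SimpleGraph α) (H : SimpleGraph β) :
    SimpleGraph (α × β) where
  Adj x y := G.Adj x.1 y.1 ∨ (x.1 = y.1 ∧ H.Adj x.2 y.2)
  symm := ⟨fun _ _ h => h.imp Adj.symm (fun h => ⟨h.1.symm, h.2.symm⟩)⟩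
  loopless := ⟨fun x h => h.elim G.irrefl (fun h => H.irrefl h.2)⟩

/-- The disjoint union of `n` copies of the complete graph on `m` vertices. -/
def CopiesComplete (n m : ℕ) : SimpleGraph (Fin n × Fin m) where
  Adj x y := x.1 = y.1 ∧ x.2 ≠ y.2
  symm := ⟨fun _ _ h => ⟨h.1.symm, h.2.symm⟩⟩
  loopless := ⟨fun x h => h.2 rfl⟩

/-- Every pair of vertices lies on a common cycle of length five. -/
def C5Connected (G : SimpleGraph V) : Prop :=
  ∀ u v : V, ∃ (w : V) (c : G.Walk w w), c.IsCycle ∧ c.length = 5 ∧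
    u ∈ c.support ∧ v ∈ c.support


section Aux

open SimpleGraph

lemma aux_dist_lt_card [Fintype V] {G : SimpleGraph V} (hG : G.Connected) (u v : V) :
    G.dist u v < Fintype.card V := by
  obtain ⟨p, hp, hl⟩ := hG.exists_path_of_dist u v
  exact hl ▸ hp.length_lt

lemma aux_climb [Fintype V] {G : SimpleGraph V} (hG : G.Connected) (u : V) :
    ∀ n (v : V), Fintype.card V - G.dist u v ≤ n →
      ∃ z, MaxDistant G z u ∧ G.dist u z = G.dist u v + G.dist v z := by
  intro n
  induction n with
  | zero =>
    intro v h
    have := aux_dist_lt_card hG u v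
    omega
  | succ n ih =>
    intro v h
    by_cases hv : MaxDistant G v u
    · exact ⟨v, hv, by simp [SimpleGraph.dist_self]⟩
    · simp only [MaxDistant, not_forall, not_le] at hv
      obtain ⟨w, hadj, hlt⟩ := hv
      have hvw : G.dist v w = 1 := SimpleGraph.dist_eq_one_iff_adj.mpr hadj
      have ht : G.dist u w ≤ G.dist u v + G.dist v w := hG.dist_triangle
      have hw : G.dist u w = G.dist u v + 1 := by omega
      obtain ⟨z, hz, he⟩ := ih w (by omega)
      refine ⟨z, hz, ?_⟩
      have t1 : G.dist u z ≤ G.dist u v + G.dist v z := hG.dist_triangle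
      have t2 : G.dist v z ≤ G.dist v w + G.dist w z := hG.dist_triangle
      omega

lemma aux_between_contra [Fintype V] {G : SimpleGraph V} (hG : G.Connected) {z a b : V}
    (hMD : MaxDistant G a z) (hab : a ≠ b)
    (hbtw : G.dist z a + G.dist a b = G.dist z b) : False := by
  have h1 : 0 < G.dist a b := hG.pos_dist_of_ne hab
  obtain ⟨p, hp⟩ := hG.exists_walk_length_eq_dist a b
  cases p with
  | nil => simp at hp; omega
  | @cons _ w _ hadj q =>
    have hwb : G.dist w b ≤ q.length := SimpleGraph.dist_le q
    have hzw : G.dist z b ≤ G.dist z w + G.dist w b := hG.dist_triangle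
    have hmd := hMD w hadj
    simp only [SimpleGraph.Walk.length_cons] at hp
    omega

lemma aux_step [Fintype V] {G : SimpleGraph V} (hG : G.Connected) {a b : V}
    (hnot : ¬ MaxDistant G a b) :
    ∃ z, MaxDistant G z b ∧ z ≠ a ∧ z ≠ b ∧ G.dist b a + G.dist a z = G.dist b z := by
  simp only [MaxDistant, not_forall, not_le] at hnot
  obtain ⟨w, hadj, hlt⟩ := hnot
  obtain ⟨z, hz, he⟩ := aux_climb hG b (Fintype.card V - G.dist b w) w le_rfl
  have haw : G.dist a w = 1 := SimpleGraph.dist_eq_one_iff_adj.mpr hadj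
  have h1 : G.dist b w ≤ G.dist b a + G.dist a w := hG.dist_triangle
  have haz : G.dist a z ≤ G.dist a w + G.dist w z := hG.dist_triangle
  have t : G.dist b z ≤ G.dist b a + G.dist a z := hG.dist_triangle
  have hbz : G.dist b a < G.dist b z := by omega
  refine ⟨z, hz, ?_, ?_, by omega⟩
  · intro h; rw [h] at hbz; omega
  · intro h
    rw [h] at hbz
    have h0 : G.dist b b = 0 := SimpleGraph.dist_self
    omega

end Aux

theorem stmt8 (r : ℕ) (hr : 1 ≤ r) [Fintype V] (G : SimpleGraph V)
    (hG : G.Connected) (hn : 2 ≤ Fintype.card V) :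
    ¬ Nonempty (srGraph G ≃g completeBipartiteGraph (Fin 2) (Fin r)) := by
  rintro ⟨φ⟩
  set A : boundary G := φ.symm (Sum.inl 0) with hA
  set B : boundary G := φ.symm (Sum.inl 1) with hB
  have hABne : A ≠ B := by
    intro h
    have := congrArg φ h
    rw [hA, hB, RelIso.apply_symm_apply, RelIso.apply_symm_apply] at this
    simp at this
  have hab : (A : V) ≠ (B : V) := fun h => hABne (Subtype.ext h)
  have hadjAB : ¬ (srGraph G).Adj A B := by
    rw [← φ.map_adj_iff, hA, hB, RelIso.apply_symm_apply, RelIso.apply_symm_apply]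
    simp [completeBipartiteGraph]
  have key : ∀ z (hz : z ∈ boundary G), z ≠ (A : V) → z ≠ (B : V) →
      MMD G (A : V) z ∧ MMD G (B : V) z := by
    intro z hz h1 h2
    rcases hφ : φ ⟨z, hz⟩ with x | i
    · have hZ : (⟨z, hz⟩ : boundary G) = φ.symm (Sum.inl x) := by
        have := congrArg φ.symm hφ
        rwa [RelIso.symm_apply_apply] at this
      fin_cases x
      · exact absurd (congrArg Subtype.val hZ) h1
      · exact absurd (congrArg Subtype.val hZ) h2
    · constructor
      · have hadj : (srGraph G).Adj ⟨z, hz⟩ A := by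
          rw [← φ.map_adj_iff, hφ, hA, RelIso.apply_symm_apply]
          simp [completeBipartiteGraph]
        obtain ⟨hne, hm1, hm2⟩ := hadj
        exact ⟨hm2, hm1⟩
      · have hadj : (srGraph G).Adj ⟨z, hz⟩ B := by
          rw [← φ.map_adj_iff, hφ, hB, RelIso.apply_symm_apply]
          simp [completeBipartiteGraph]
        obtain ⟨hne, hm1, hm2⟩ := hadj
        exact ⟨hm2, hm1⟩
  have hMDa : MaxDistant G (A : V) (B : V) := by
    by_contra hnot
    obtain ⟨z, hzmd, hza, hzb, hbtw⟩ := aux_step hG hnot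
    have hzbd : z ∈ boundary G := ⟨(B : V), hzmd⟩
    have hmmd := (key z hzbd hza hzb).1
    exact aux_between_contra hG hmmd.1 hab
      (by have h1 : G.dist z (A : V) = G.dist (A : V) z := SimpleGraph.dist_comm
          have h2 : G.dist z (B : V) = G.dist (B : V) z := SimpleGraph.dist_comm
          have h3 : G.dist (A : V) (B : V) = G.dist (B : V) (A : V) := SimpleGraph.dist_comm
          omega)
  have hMDb : MaxDistant G (B : V) (A : V) := by
    by_contra hnot
    obtain ⟨z, hzmd, hzb, hza, hbtw⟩ := aux_step hG hnot
    have hzbd : z ∈ boundary G := ⟨(A : V), hzmd⟩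
    have hmmd := (key z hzbd hza hzb).2
    exact aux_between_contra hG hmmd.1 hab.symm
      (by have h1 : G.dist z (A : V) = G.dist (A : V) z := SimpleGraph.dist_comm
          have h2 : G.dist z (B : V) = G.dist (B : V) z := SimpleGraph.dist_comm
          have h3 : G.dist (A : V) (B : V) = G.dist (B : V) (A : V) := SimpleGraph.dist_comm
          omega)
  exact hadjAB ⟨hab, hMDa, hMDb⟩
end

section
/- For all integers r, t ≥ 1 and n ≥ 3, the strong resolving graph of the direct product K_{r,t} × K_n is isomorphic to the disjoint union of n copies of the complete graph K_{r+t}. Equivalently, two distinct vertices (g,h) and (g',h') of K_{r,t} × K_n are mutually maximally distant if and only if h = h'. -/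
open SimpleGraph

variable {V : Type*}

/-! Auxiliary lemmas for stmt15 -/

private def GG (r t n : ℕ) : SimpleGraph ((Fin r ⊕ Fin t) × Fin n) :=
  DirectProd (completeBipartiteGraph (Fin r) (Fin t)) (⊤ : SimpleGraph (Fin n))

private lemma GG_adj {r t n : ℕ} {g g' : Fin r ⊕ Fin t} {h h' : Fin n} :
    (GG r t n).Adj (g, h) (g', h') ↔ g.isLeft ≠ g'.isLeft ∧ h ≠ h' := by
  cases g <;> cases g' <;> simp [GG, DirectProd]

private lemma exists_third {n : ℕ} (hn : 3 ≤ n) (h h' : Fin n) :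
    ∃ k : Fin n, k ≠ h ∧ k ≠ h' := by
  have hcard : ({h, h'} : Finset (Fin n)).card ≤ 2 := by
    apply le_trans (Finset.card_insert_le _ _); simp
  have : ({h, h'}ᶜ : Finset (Fin n)).Nonempty := by
    rw [← Finset.card_pos, Finset.card_compl, Fintype.card_fin]
    omega
  obtain ⟨k, hk⟩ := this
  simp only [Finset.mem_compl, Finset.mem_insert, Finset.mem_singleton, not_or] at hk
  exact ⟨k, hk.1, hk.2⟩

private lemma exists_opp {r t : ℕ} (hr : 1 ≤ r) (ht : 1 ≤ t) (g : Fin r ⊕ Fin t) :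
    ∃ a : Fin r ⊕ Fin t, a.isLeft ≠ g.isLeft := by
  cases g with
  | inl x => exact ⟨Sum.inr ⟨0, ht⟩, by simp⟩
  | inr x => exact ⟨Sum.inl ⟨0, hr⟩, by simp⟩

private lemma GG_dist_one {r t n : ℕ} {g g' : Fin r ⊕ Fin t} {h h' : Fin n}
    (hs : g.isLeft ≠ g'.isLeft) (hh : h ≠ h') :
    (GG r t n).dist (g, h) (g', h') = 1 :=
  SimpleGraph.dist_eq_one_iff_adj.mpr (GG_adj.mpr ⟨hs, hh⟩)

private lemma dist_two {r t n : ℕ} (hr : 1 ≤ r) (ht : 1 ≤ t) (hn : 3 ≤ n)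
    {g g' : Fin r ⊕ Fin t} {h h' : Fin n}
    (hs : g.isLeft = g'.isLeft) (hne : (g, h) ≠ (g', h')) :
    (GG r t n).dist (g, h) (g', h') = 2 := by
  obtain ⟨a, ha⟩ := exists_opp hr ht g
  obtain ⟨k, hk1, hk2⟩ := exists_third hn h h'
  have adj1 : (GG r t n).Adj (g, h) (a, k) := GG_adj.mpr ⟨fun e => ha e.symm, fun e => hk1 e.symm⟩
  have adj2 : (GG r t n).Adj (a, k) (g', h') := GG_adj.mpr ⟨hs ▸ ha, hk2⟩
  have hle : (GG r t n).dist (g, h) (g', h') ≤ 2 := by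
    simpa using SimpleGraph.dist_le (SimpleGraph.Walk.cons adj1 (SimpleGraph.Walk.cons adj2 SimpleGraph.Walk.nil))
  have hreach : (GG r t n).Reachable (g, h) (g', h') :=
    ⟨SimpleGraph.Walk.cons adj1 (SimpleGraph.Walk.cons adj2 SimpleGraph.Walk.nil)⟩
  have hpos : 0 < (GG r t n).dist (g, h) (g', h') := hreach.pos_dist_of_ne hne
  have hne1 : (GG r t n).dist (g, h) (g', h') ≠ 1 := by
    intro h1
    have := SimpleGraph.dist_eq_one_iff_adj.mp h1
    rw [GG_adj] at this
    exact this.1 hs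
  omega

private lemma dist_three {r t n : ℕ} (hn : 3 ≤ n)
    {g g' : Fin r ⊕ Fin t} {h : Fin n} (hs : g.isLeft ≠ g'.isLeft) :
    (GG r t n).dist (g, h) (g', h) = 3 := by
  obtain ⟨k1, hk1, _⟩ := exists_third hn h h
  obtain ⟨k2, hk2, hk21⟩ := exists_third hn h k1
  have adj1 : (GG r t n).Adj (g, h) (g', k1) := GG_adj.mpr ⟨hs, fun e => hk1 e.symm⟩
  have adj2 : (GG r t n).Adj (g', k1) (g, k2) := GG_adj.mpr ⟨fun e => hs e.symm, fun e => hk21 e.symm⟩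
  have adj3 : (GG r t n).Adj (g, k2) (g', h) := GG_adj.mpr ⟨hs, hk2⟩
  have hle : (GG r t n).dist (g, h) (g', h) ≤ 3 := by
    simpa using SimpleGraph.dist_le (SimpleGraph.Walk.cons adj1 (SimpleGraph.Walk.cons adj2 (SimpleGraph.Walk.cons adj3 SimpleGraph.Walk.nil)))
  have hreach : (GG r t n).Reachable (g, h) (g', h) :=
    ⟨SimpleGraph.Walk.cons adj1 (SimpleGraph.Walk.cons adj2 (SimpleGraph.Walk.cons adj3 SimpleGraph.Walk.nil))⟩
  have hgg : g ≠ g' := fun e => hs (e ▸ rfl)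
  have hpos : 0 < (GG r t n).dist (g, h) (g', h) :=
    hreach.pos_dist_of_ne (by simp [hgg])
  have hne1 : (GG r t n).dist (g, h) (g', h) ≠ 1 := by
    intro h1
    have := SimpleGraph.dist_eq_one_iff_adj.mp h1
    rw [GG_adj] at this
    exact this.2 rfl
  have hne2 : (GG r t n).dist (g, h) (g', h) ≠ 2 := by
    intro h2
    obtain ⟨p', hp'⟩ := hreach.exists_walk_length_eq_dist
    rw [h2] at hp'
    cases p' with
    | nil => simp at hp'
    | cons a1 q =>
      rename_i mid
      obtain ⟨m1, m2⟩ := mid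
      cases q with
      | nil => simp at hp'
      | cons a2 q2 =>
        cases q2 with
        | cons a3 q3 => simp [SimpleGraph.Walk.length_cons] at hp'
        | nil =>
          rw [GG_adj] at a1 a2
          obtain ⟨a1l, -⟩ := a1
          obtain ⟨a2l, -⟩ := a2
          cases hg : g.isLeft <;> cases hg' : Sum.isLeft g' <;>
            cases hm : Sum.isLeft m1 <;> simp_all
  omega

private lemma dist_le_three {r t n : ℕ} (hr : 1 ≤ r) (ht : 1 ≤ t) (hn : 3 ≤ n)
    (u v : (Fin r ⊕ Fin t) × Fin n) : (GG r t n).dist u v ≤ 3 := by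
  obtain ⟨g, h⟩ := u; obtain ⟨g', h'⟩ := v
  by_cases he : ((g, h) : (Fin r ⊕ Fin t) × Fin n) = (g', h')
  · rw [he, SimpleGraph.dist_self]; omega
  rcases eq_or_ne g.isLeft g'.isLeft with hs | hs
  · rw [dist_two hr ht hn hs he]; omega
  · rcases eq_or_ne h h' with hh | hh
    · subst hh; rw [dist_three hn hs]
    · rw [GG_dist_one hs hh]; omega

private lemma mmd_iff {r t n : ℕ} (hr : 1 ≤ r) (ht : 1 ≤ t) (hn : 3 ≤ n)
    {g g' : Fin r ⊕ Fin t} {h h' : Fin n} (hne : ((g, h) : (Fin r ⊕ Fin t) × Fin n) ≠ (g', h')) :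
    MMD (GG r t n) (g, h) (g', h') ↔ h = h' := by
  constructor
  · intro hm
    by_contra hh
    rcases eq_or_ne g.isLeft g'.isLeft with hs | hs
    · -- same side, h ≠ h': neighbor (a, h') of (g,h) is at distance 3 from (g',h')
      obtain ⟨a, ha⟩ := exists_opp hr ht g
      have hadj : (GG r t n).Adj (g, h) (a, h') :=
        GG_adj.mpr ⟨fun e => ha e.symm, hh⟩
      have h1 := hm.1 (a, h') hadj
      rw [dist_two hr ht hn hs.symm (fun e => hne e.symm)] at h1
      rw [dist_three hn (hs ▸ ha).symm] at h1
      omega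
    · -- opposite sides, h ≠ h': neighbor (g', k) of (g,h) is at distance 2 from (g',h')
      obtain ⟨k, hk1, hk2⟩ := exists_third hn h h'
      have hadj : (GG r t n).Adj (g, h) (g', k) :=
        GG_adj.mpr ⟨hs, fun e => hk1 e.symm⟩
      have h1 := hm.1 (g', k) hadj
      rw [dist_two hr ht hn rfl
        (show ((g', h') : (Fin r ⊕ Fin t) × Fin n) ≠ (g', k) by
          simp only [ne_eq, Prod.mk.injEq, not_and]
          exact fun _ e => hk2 e.symm)] at h1
      rw [SimpleGraph.dist_comm, GG_dist_one hs hh] at h1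
      omega
  · intro hh
    subst hh
    have hgg : g ≠ g' := fun e => hne (by rw [e])
    rcases eq_or_ne g.isLeft g'.isLeft with hs | hs
    · constructor
      · rintro ⟨w1, w2⟩ hw
        rw [GG_adj] at hw
        rw [dist_two hr ht hn hs.symm (fun e => hne e.symm)]
        rw [GG_dist_one (hs ▸ hw.1) hw.2]
        omega
      · rintro ⟨w1, w2⟩ hw
        rw [GG_adj] at hw
        rw [dist_two hr ht hn hs hne]
        rw [GG_dist_one (hs ▸ hw.1) hw.2]
        omega
    · constructor
      · rintro w hw
        rw [dist_three hn (fun e => hs e.symm)]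
        exact dist_le_three hr ht hn _ _
      · rintro w hw
        rw [dist_three hn hs]
        exact dist_le_three hr ht hn _ _

private lemma mem_bdry {r t n : ℕ} (hr : 1 ≤ r) (ht : 1 ≤ t) (hn : 3 ≤ n)
    (x : (Fin r ⊕ Fin t) × Fin n) : x ∈ boundary (GG r t n) := by
  obtain ⟨g, h⟩ := x
  obtain ⟨a, ha⟩ := exists_opp hr ht g
  have hne : ((g, h) : (Fin r ⊕ Fin t) × Fin n) ≠ (a, h) := by
    intro e
    exact ha (congrArg (fun z => Sum.isLeft z.1) e).symm
  exact ⟨(a, h), ((mmd_iff hr ht hn hne).mpr rfl).1⟩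

theorem stmt15 (r t n : ℕ) (hr : 1 ≤ r) (ht : 1 ≤ t) (hn : 3 ≤ n) :
    Nonempty (srGraph (DirectProd (completeBipartiteGraph (Fin r) (Fin t))
        (⊤ : SimpleGraph (Fin n))) ≃g CopiesComplete n (r + t)) ∧
    (∀ (g g' : Fin r ⊕ Fin t) (h h' : Fin n), (g, h) ≠ (g', h') →
      (MMD (DirectProd (completeBipartiteGraph (Fin r) (Fin t))
        (⊤ : SimpleGraph (Fin n))) (g, h) (g', h') ↔ h = h')) := by
  refine ⟨?_, fun g g' h h' hne => mmd_iff hr ht hn hne⟩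
  have hb : ∀ x, x ∈ boundary (GG r t n) := mem_bdry hr ht hn
  let e1 : ↥(boundary (GG r t n)) ≃ (Fin r ⊕ Fin t) × Fin n :=
    { toFun := fun x => x.1
      invFun := fun x => ⟨x, hb x⟩
      left_inv := fun x => rfl
      right_inv := fun x => rfl }
  let e2 : (Fin r ⊕ Fin t) × Fin n ≃ Fin n × Fin (r + t) :=
    (Equiv.prodComm _ _).trans (Equiv.prodCongr (Equiv.refl _) finSumFinEquiv)
  refine ⟨{ toEquiv := e1.trans e2, map_rel_iff' := ?_ }⟩
  rintro ⟨⟨g, h⟩, hb1⟩ ⟨⟨g', h'⟩, hb2⟩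
  show (CopiesComplete n (r + t)).Adj (h, finSumFinEquiv g) (h', finSumFinEquiv g') ↔ _
  constructor
  · rintro ⟨hh, hg⟩
    have hgg : g ≠ g' := fun e => hg (by rw [e])
    have hne : ((g, h) : (Fin r ⊕ Fin t) × Fin n) ≠ (g', h') := by
      simp [hgg]
    exact ⟨hne, (mmd_iff hr ht hn hne).mpr hh⟩
  · rintro ⟨hne, hm⟩
    have hh : h = h' := (mmd_iff hr ht hn hne).mp hm
    subst hh
    have hgg : g ≠ g' := by
      intro e
      apply hne
      show ((g, h) : (Fin r ⊕ Fin t) × Fin n) = (g', h)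
      rw [e]
    exact ⟨rfl, fun e => hgg (finSumFinEquiv.injective e)⟩
end

section
/- Let G be a finite connected graph with at least two vertices, let H be a graph with at least two vertices, and let a, b be distinct vertices of G that are not true twins in G. Then for any vertices x, y of H, the vertices (a,x) and (b,y) are mutually maximally distant in the lexicographic product G ∘ H if and only if a and b are mutually maximally distant in G. -/
open SimpleGraph

variable {V : Type*}

section lexAux

variable {α β : Type*}

/-- Graph homomorphism `G → G ∘ H` fixing the second coordinate. -/
def lexHom (G : SimpleGraph α) (H : SimpleGraph β) (y : β) : G →g LexProd G H :=
  ⟨fun u => (u, y), fun h => Or.inl h⟩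

lemma lex_walk_of_ne (G : SimpleGraph α) (H : SimpleGraph β) {a b : α} (hab : a ≠ b)
    (x y : β) (p : G.Walk a b) :
    ∃ q : (LexProd G H).Walk (a, x) (b, y), q.length = p.length := by
  cases p with
  | nil => exact absurd rfl hab
  | cons h p' =>
    refine ⟨Walk.cons (Or.inl h) (p'.map (lexHom G H y)), ?_⟩
    exact congrArg (· + 1) (Walk.length_map _ _)

lemma dist_le_lex_walk (G : SimpleGraph α) (H : SimpleGraph β) (hG : G.Connected) :
    ∀ {u v : α × β} (p : (LexProd G H).Walk u v), G.dist u.1 v.1 ≤ p.length := by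
  intro u v p
  induction p with
  | nil => simp
  | @cons u w v h p ih =>
    rcases h with h | ⟨h, _⟩
    · have h1 : G.dist u.1 w.1 = 1 := SimpleGraph.dist_eq_one_iff_adj.mpr h
      have ht : G.dist u.1 v.1 ≤ G.dist u.1 w.1 + G.dist w.1 v.1 := hG.dist_triangle
      show G.dist u.1 v.1 ≤ p.length + 1
      omega
    · have he : G.dist u.1 v.1 = G.dist w.1 v.1 := by rw [h]
      show G.dist u.1 v.1 ≤ p.length + 1
      omega

lemma lex_dist_eq (G : SimpleGraph α) (H : SimpleGraph β) (hG : G.Connected)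
    {a b : α} (hab : a ≠ b) (x y : β) :
    (LexProd G H).dist (a, x) (b, y) = G.dist a b := by
  obtain ⟨p, hp⟩ := hG.exists_walk_length_eq_dist a b
  obtain ⟨q, hq⟩ := lex_walk_of_ne G H hab x y p
  refine le_antisymm ?_ ?_
  · calc (LexProd G H).dist (a, x) (b, y) ≤ q.length := SimpleGraph.dist_le q
      _ = G.dist a b := by rw [hq, hp]
  · have hne : (LexProd G H).dist (a, x) (b, y) ≠ 0 := by
      rw [SimpleGraph.dist_ne_zero_iff_ne_and_reachable]
      exact ⟨fun he => hab (congrArg Prod.fst he), ⟨q⟩⟩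
    obtain ⟨r, hr⟩ := SimpleGraph.exists_walk_of_dist_ne_zero hne
    rw [← hr]
    exact dist_le_lex_walk G H hG r

lemma exists_adj_of_connected [Fintype α] (G : SimpleGraph α) (hG : G.Connected)
    (h2 : 2 ≤ Fintype.card α) (a : α) : ∃ c, G.Adj a c := by
  obtain ⟨b, hb⟩ := Fintype.exists_ne_of_one_lt_card h2 a
  obtain ⟨p⟩ := hG.preconnected a b
  cases p with
  | nil => exact absurd rfl hb
  | cons h _ => exact ⟨_, h⟩

lemma lex_dist_fiber_le [Fintype α] (G : SimpleGraph α) (H : SimpleGraph β)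
    (hG : G.Connected) (h2 : 2 ≤ Fintype.card α) (a : α) (x z : β) :
    (LexProd G H).dist (a, x) (a, z) ≤ 2 := by
  obtain ⟨c, hc⟩ := exists_adj_of_connected G hG h2 a
  refine le_trans (SimpleGraph.dist_le
    (Walk.cons (show (LexProd G H).Adj (a, x) (c, x) from Or.inl hc)
      (Walk.cons (show (LexProd G H).Adj (c, x) (a, z) from Or.inl hc.symm) Walk.nil))) ?_
  simp

end lexAux

theorem stmt19 {α β : Type*} [Fintype α] [Fintype β]
    (G : SimpleGraph α) (H : SimpleGraph β)
    (hG : G.Connected) (h2G : 2 ≤ Fintype.card α) (h2H : 2 ≤ Fintype.card β)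
    (a b : α) (hab : a ≠ b) (htw : ¬ TrueTwins G a b) :
    ∀ x y : β, MMD (LexProd G H) (a, x) (b, y) ↔ MMD G a b := by
  -- basic facts
  have key : ∀ (c d : α) (z w : β), c ≠ d →
      (LexProd G H).dist (c, z) (d, w) = G.dist c d :=
    fun c d z w h => lex_dist_eq G H hG h z w
  intro x y
  constructor
  · rintro ⟨h1, h2⟩
    constructor
    · intro w hw
      by_cases hwb : w = b
      · rw [hwb, SimpleGraph.dist_self]
        exact Nat.zero_le _
      · have := h1 (w, y) (Or.inl hw)
        rwa [key b w y y (Ne.symm hwb), key b a y x (Ne.symm hab)] at this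
    · intro w hw
      by_cases hwa : w = a
      · rw [hwa, SimpleGraph.dist_self]
        exact Nat.zero_le _
      · have := h2 (w, x) (Or.inl hw)
        rwa [key a w x x (Ne.symm hwa), key a b x y hab] at this
  · rintro ⟨h1, h2⟩
    -- a and b are not adjacent, else they would be true twins
    have hnadj : ¬ G.Adj a b := by
      intro hadj
      apply htw
      refine ⟨hab, ?_⟩
      have hdab : G.dist a b = 1 := SimpleGraph.dist_eq_one_iff_adj.mpr hadj
      have hdba : G.dist b a = 1 := SimpleGraph.dist_eq_one_iff_adj.mpr hadj.symm
      have hsub : ∀ w, G.Adj a w → w = b ∨ G.Adj b w := by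
        intro w hw
        have := h1 w hw
        rw [hdba] at this
        interval_cases h : G.dist b w
        · left
          exact (hG.dist_eq_zero_iff.mp h).symm ▸ rfl
        · right
          exact SimpleGraph.dist_eq_one_iff_adj.mp h
      have hsub' : ∀ w, G.Adj b w → w = a ∨ G.Adj a w := by
        intro w hw
        have := h2 w hw
        rw [hdab] at this
        interval_cases h : G.dist a w
        · left
          exact (hG.dist_eq_zero_iff.mp h).symm ▸ rfl
        · right
          exact SimpleGraph.dist_eq_one_iff_adj.mp h
      ext w
      simp only [Set.mem_insert_iff, SimpleGraph.mem_neighborSet]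
      constructor
      · rintro (rfl | hw)
        · exact Or.inr hadj.symm
        · rcases hsub w hw with rfl | h
          · exact Or.inl rfl
          · exact Or.inr h
      · rintro (rfl | hw)
        · exact Or.inr hadj
        · rcases hsub' w hw with rfl | h
          · exact Or.inl rfl
          · exact Or.inr h
    have hd2 : 2 ≤ G.dist a b := by
      have h0 : G.dist a b ≠ 0 := by
        rw [SimpleGraph.dist_ne_zero_iff_ne_and_reachable]
        exact ⟨hab, hG.preconnected a b⟩
      have h1' : G.dist a b ≠ 1 := fun h => hnadj (SimpleGraph.dist_eq_one_iff_adj.mp h)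
      omega
    constructor
    · rintro ⟨c, z⟩ hadj
      rw [key b a y x (Ne.symm hab)]
      rcases hadj with hac | ⟨rfl, hxz⟩
      · by_cases hcb : c = b
        · rw [hcb]
          calc (LexProd G H).dist (b, y) (b, z) ≤ 2 :=
                lex_dist_fiber_le G H hG h2G b y z
            _ ≤ G.dist b a := by rw [G.dist_comm]; exact hd2
        · rw [key b c y z (Ne.symm hcb)]
          exact h1 c hac
      · rw [key b a y z (Ne.symm hab)]
    · rintro ⟨c, z⟩ hadj
      rw [key a b x y hab]
      rcases hadj with hbc | ⟨rfl, hyz⟩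
      · by_cases hca : c = a
        · rw [hca]
          calc (LexProd G H).dist (a, x) (a, z) ≤ 2 :=
                lex_dist_fiber_le G H hG h2G a x z
            _ ≤ G.dist a b := hd2
        · rw [key a c x z (Ne.symm hca)]
          exact h2 c hbc
      · rw [key a b x z hab]
end
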